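/- For every unitary U on C^d with tr(U) = 0, the channel ρ ↦ ∫ dV V† U (V ρ V†) U† V averaged over a unitary 2-design {(p_k, V_k)} equals ρ ↦ (1/(d²−1))(d²·(I/d) − ρ) = (1/(d²−1))(d·I − ρ). -/
import Mathlib

open Matrix Kronecker BigOperators
open scoped ComplexOrder

/-- The maximally entangled state projector `Φ_d` on `ℂ^d ⊗ ℂ^d`. -/
noncomputable def maxEnt (d : ℕ) : Matrix (Fin d × Fin d) (Fin d × Fin d) ℂ :=
  (1 / (d : ℂ)) • Matrix.of (fun p q => if p.1 = p.2 ∧ q.1 = q.2 then 1 else 0)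

/-- Entrywise complex conjugate of a matrix. -/
def conjMat {d : ℕ} (U : Matrix (Fin d) (Fin d) ℂ) : Matrix (Fin d) (Fin d) ℂ :=
  U.map (starRingEnd ℂ)

/-- The `U ⊗ Ū`-twirl: projection onto the isotropic operators. -/
noncomputable def twirl {d : ℕ} (X : Matrix (Fin d × Fin d) (Fin d × Fin d) ℂ) :
    Matrix (Fin d × Fin d) (Fin d × Fin d) ℂ :=
  (X * maxEnt d).trace • maxEnt d +
    ((X * (1 - maxEnt d)).trace / ((d : ℂ) ^ 2 - 1)) • (1 - maxEnt d)

/- ### Auxiliary lemmas -/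

lemma trace_stdBasis_mul {n : Type*} [Fintype n] [DecidableEq n]
    (Z : Matrix n n ℂ) (a b : n) :
    (Matrix.single b a (1:ℂ) * Z).trace = Z a b := by
  simp [Matrix.trace, Matrix.mul_apply, Matrix.single, Matrix.diag, ite_and]

lemma conjMat_mul {d : ℕ} (A B : Matrix (Fin d) (Fin d) ℂ) :
    conjMat (A * B) = conjMat A * conjMat B := by
  simp [conjMat, Matrix.map_mul]

lemma conjMat_conjTranspose {d : ℕ} (A : Matrix (Fin d) (Fin d) ℂ) :
    conjMat (Aᴴ) = (conjMat A)ᴴ := by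
  ext i j; simp [conjMat, Matrix.conjTranspose_apply]

lemma kron_conjTranspose {d : ℕ} (A B : Matrix (Fin d) (Fin d) ℂ) :
    (A ⊗ₖ B)ᴴ = Aᴴ ⊗ₖ Bᴴ := by
  ext ⟨i, j⟩ ⟨k, l⟩
  simp [Matrix.conjTranspose_apply, Matrix.kroneckerMap_apply, mul_comm]

lemma twirl_trace_comm {d : ℕ} (E Y : Matrix (Fin d × Fin d) (Fin d × Fin d) ℂ) :
    (twirl E * Y).trace = (E * twirl Y).trace := by
  simp only [twirl, Matrix.add_mul, Matrix.mul_add, Matrix.smul_mul, Matrix.mul_smul,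
    Matrix.trace_add, Matrix.trace_smul, smul_eq_mul]
  rw [Matrix.trace_mul_comm (maxEnt d) Y, Matrix.trace_mul_comm (1 - maxEnt d) Y,
    Matrix.trace_mul_comm E (maxEnt d), Matrix.trace_mul_comm E (1 - maxEnt d)]
  ring

/-- The adjoint of a 2-design identity: conjugation by `(V ⊗ V̄)ᴴ` also twirls. -/
lemma design_adjoint {d N : ℕ} (p : Fin N → ℝ) (V : Fin N → Matrix (Fin d) (Fin d) ℂ)
    (hdesign : ∀ X : Matrix (Fin d × Fin d) (Fin d × Fin d) ℂ,
      ∑ k, (p k : ℂ) • ((V k ⊗ₖ conjMat (V k)) * X * (V k ⊗ₖ conjMat (V k))ᴴ) = twirl X)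
    (Y : Matrix (Fin d × Fin d) (Fin d × Fin d) ℂ) :
    ∑ k, (p k : ℂ) • ((V k ⊗ₖ conjMat (V k))ᴴ * Y * (V k ⊗ₖ conjMat (V k))) = twirl Y := by
  apply Matrix.ext; intro r s
  have h1 : ∀ Z : Matrix (Fin d × Fin d) (Fin d × Fin d) ℂ,
      Z r s = (Matrix.single s r (1:ℂ) * Z).trace :=
    fun Z => (trace_stdBasis_mul Z r s).symm
  rw [Matrix.sum_apply]
  simp only [Matrix.smul_apply, smul_eq_mul]
  set E := Matrix.single s r (1:ℂ) with hE
  have step : ∀ k, ((V k ⊗ₖ conjMat (V k))ᴴ * Y * (V k ⊗ₖ conjMat (V k))) r s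
      = (((V k ⊗ₖ conjMat (V k)) * E * (V k ⊗ₖ conjMat (V k))ᴴ) * Y).trace := by
    intro k
    set M := V k ⊗ₖ conjMat (V k) with hM
    rw [h1 (Mᴴ * Y * M)]
    have := Matrix.trace_mul_comm (E * Mᴴ * Y) M
    simp only [Matrix.mul_assoc] at this ⊢
    rw [this]
  calc ∑ k, (p k : ℂ) * ((V k ⊗ₖ conjMat (V k))ᴴ * Y * (V k ⊗ₖ conjMat (V k))) r s
      = ((∑ k, (p k : ℂ) • ((V k ⊗ₖ conjMat (V k)) * E * (V k ⊗ₖ conjMat (V k))ᴴ)) * Y).trace := by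
        rw [Matrix.sum_mul, Matrix.trace_sum]
        refine Finset.sum_congr rfl fun k _ => ?_
        rw [step k, Matrix.smul_mul, Matrix.trace_smul, smul_eq_mul]
    _ = (twirl E * Y).trace := by rw [hdesign E]
    _ = (E * twirl Y).trace := twirl_trace_comm E Y
    _ = (twirl Y) r s := (h1 _).symm

/-- Applying a superoperator-matrix to a state. -/
noncomputable def chanOf {d : ℕ} (M : Matrix (Fin d × Fin d) (Fin d × Fin d) ℂ)
    (ρ : Matrix (Fin d) (Fin d) ℂ) : Matrix (Fin d) (Fin d) ℂ :=
  Matrix.of fun i j => ∑ a, ∑ b, M (i, j) (a, b) * ρ a b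

lemma chanOf_kron {d : ℕ} (A ρ : Matrix (Fin d) (Fin d) ℂ) :
    chanOf (A ⊗ₖ conjMat A) ρ = A * ρ * Aᴴ := by
  ext i j
  simp only [chanOf, Matrix.of_apply, Matrix.mul_apply, Matrix.kroneckerMap_apply, conjMat,
    Matrix.map_apply, Matrix.conjTranspose_apply, Finset.sum_mul]
  rw [Finset.sum_comm]
  refine Finset.sum_congr rfl fun b _ => Finset.sum_congr rfl fun a _ => ?_
  simp only [starRingEnd_apply]
  ring

lemma chanOf_sum {d N : ℕ} (f : Fin N → Matrix (Fin d × Fin d) (Fin d × Fin d) ℂ)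
    (ρ : Matrix (Fin d) (Fin d) ℂ) :
    chanOf (∑ k, f k) ρ = ∑ k, chanOf (f k) ρ := by
  ext i j
  simp only [chanOf, Matrix.of_apply, Matrix.sum_apply, Finset.sum_mul]
  calc ∑ a, ∑ b, ∑ k, f k (i, j) (a, b) * ρ a b
      = ∑ a, ∑ k, ∑ b, f k (i, j) (a, b) * ρ a b := by
        exact Finset.sum_congr rfl fun a _ => Finset.sum_comm
    _ = ∑ k, ∑ a, ∑ b, f k (i, j) (a, b) * ρ a b := Finset.sum_comm

lemma chanOf_smul {d : ℕ} (c : ℂ) (M : Matrix (Fin d × Fin d) (Fin d × Fin d) ℂ)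
    (ρ : Matrix (Fin d) (Fin d) ℂ) : chanOf (c • M) ρ = c • chanOf M ρ := by
  ext i j
  simp [chanOf, Finset.mul_sum, mul_assoc]

lemma chanOf_add {d : ℕ} (M N' : Matrix (Fin d × Fin d) (Fin d × Fin d) ℂ)
    (ρ : Matrix (Fin d) (Fin d) ℂ) : chanOf (M + N') ρ = chanOf M ρ + chanOf N' ρ := by
  ext i j
  simp [chanOf, add_mul, Finset.sum_add_distrib]

lemma chanOf_sub {d : ℕ} (M N' : Matrix (Fin d × Fin d) (Fin d × Fin d) ℂ)
    (ρ : Matrix (Fin d) (Fin d) ℂ) : chanOf (M - N') ρ = chanOf M ρ - chanOf N' ρ := by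
  ext i j
  simp [chanOf, sub_mul, Finset.sum_sub_distrib]

lemma chanOf_one {d : ℕ} (ρ : Matrix (Fin d) (Fin d) ℂ) : chanOf 1 ρ = ρ := by
  ext i j
  simp [chanOf, Matrix.one_apply, Prod.ext_iff, ite_and]

lemma chanOf_maxEnt {d : ℕ} (ρ : Matrix (Fin d) (Fin d) ℂ) (hρ1 : ρ.trace = 1) :
    chanOf (maxEnt d) ρ = (1 / (d : ℂ)) • 1 := by
  ext i j
  have htr : ∑ a, ρ a a = 1 := hρ1
  simp only [chanOf, Matrix.of_apply, maxEnt, Matrix.smul_apply, smul_eq_mul,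
    ite_and, mul_ite, mul_one, mul_zero, ite_mul, zero_mul, Matrix.one_apply]
  by_cases h : i = j
  · simp only [h, if_true, Finset.sum_ite_eq, Finset.mem_univ]
    rw [← Finset.mul_sum, htr, mul_one]
  · simp [h]

lemma trace_mul_maxEnt {d : ℕ} (X : Matrix (Fin d × Fin d) (Fin d × Fin d) ℂ) :
    (X * maxEnt d).trace = (1 / (d : ℂ)) * ∑ p, ∑ q, X (p, p) (q, q) := by
  simp only [Matrix.trace, Matrix.diag, Matrix.mul_apply, maxEnt, Matrix.smul_apply,
    Matrix.of_apply, smul_eq_mul, Fintype.sum_prod_type, ite_and, mul_ite, mul_one, mul_zero,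
    Finset.sum_ite_eq, Finset.sum_ite_eq', Finset.mem_univ, if_true, Finset.mul_sum]
  rw [Finset.sum_comm]
  refine Finset.sum_congr rfl fun p _ => ?_
  rw [Finset.sum_comm]
  simp [Finset.sum_ite_eq, mul_comm]

set_option maxHeartbeats 1600000 in
/-- A traceless unitary applied between encryption and decryption by a unitary 2-design
induces the effective channel `ρ ↦ (1/(d²−1))(d·I − ρ)` on density matrices. -/
theorem traceless_unitary_effective_channel {d N : ℕ} (hd : 2 ≤ d)
    (p : Fin N → ℝ) (hp : ∀ k, 0 ≤ p k) (hp1 : ∑ k, p k = 1)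
    (V : Fin N → Matrix (Fin d) (Fin d) ℂ)
    (hV : ∀ k, V k ∈ Matrix.unitaryGroup (Fin d) ℂ)
    (hdesign : ∀ X : Matrix (Fin d × Fin d) (Fin d × Fin d) ℂ,
      ∑ k, (p k : ℂ) • ((V k ⊗ₖ conjMat (V k)) * X * (V k ⊗ₖ conjMat (V k))ᴴ) = twirl X)
    (U : Matrix (Fin d) (Fin d) ℂ) (hU : U ∈ Matrix.unitaryGroup (Fin d) ℂ)
    (hU0 : U.trace = 0)
    (ρ : Matrix (Fin d) (Fin d) ℂ) (hρ : ρ.PosSemidef) (hρ1 : ρ.trace = 1) :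
    ∑ k, (p k : ℂ) • ((V k)ᴴ * U * V k * ρ * (V k)ᴴ * Uᴴ * V k) =
      (1 / ((d : ℂ) ^ 2 - 1)) • ((d : ℂ) • (1 : Matrix (Fin d) (Fin d) ℂ) - ρ) := by
  have hd0 : (d : ℂ) ≠ 0 := by
    exact_mod_cast Nat.cast_ne_zero.mpr (by omega)
  have hd1 : ((d : ℂ) ^ 2 - 1) ≠ 0 := by
    have : ((d ^ 2 : ℕ) : ℂ) ≠ ((1 : ℕ) : ℂ) := by
      exact_mod_cast (by nlinarith : d ^ 2 ≠ 1)
    push_cast at this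
    exact sub_ne_zero.mpr this
  -- the adjoint design identity at `U ⊗ Ū`
  have key := design_adjoint p V hdesign (U ⊗ₖ conjMat U)
  -- rewrite each Kraus term
  have hW : ∀ k, (V k ⊗ₖ conjMat (V k))ᴴ * (U ⊗ₖ conjMat U) * (V k ⊗ₖ conjMat (V k)) =
      ((V k)ᴴ * U * V k) ⊗ₖ conjMat ((V k)ᴴ * U * V k) := by
    intro k
    rw [kron_conjTranspose, conjMat_mul, conjMat_mul, conjMat_conjTranspose,
      Matrix.mul_kronecker_mul, Matrix.mul_kronecker_mul]
  simp only [hW] at key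
  -- apply the channel to ρ
  have key2 := congrArg (fun M => chanOf M ρ) key
  simp only [chanOf_sum, chanOf_smul, chanOf_kron] at key2
  -- compute the scalars of the twirl
  have t1 : ((U ⊗ₖ conjMat U) * maxEnt d).trace = 1 := by
    rw [trace_mul_maxEnt]
    have hsum : ∑ p' : Fin d, ∑ q : Fin d, (U ⊗ₖ conjMat U) (p', p') (q, q) = (d : ℂ) := by
      have hUU : (Uᴴ * U) = 1 := by
        have := hU.1
        simpa [Matrix.star_eq_conjTranspose] using this
      have htr : (Uᴴ * U).trace = (d : ℂ) := by rw [hUU]; simp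
      simp only [Matrix.trace, Matrix.diag, Matrix.mul_apply,
        Matrix.conjTranspose_apply] at htr
      rw [← htr, Finset.sum_comm]
      refine Finset.sum_congr rfl fun q _ => Finset.sum_congr rfl fun p' _ => ?_
      simp only [Matrix.kroneckerMap_apply, conjMat, Matrix.map_apply, starRingEnd_apply]
      ring
    rw [hsum]
    field_simp
  have t2 : ((U ⊗ₖ conjMat U) * (1 - maxEnt d)).trace = -1 := by
    rw [Matrix.mul_sub, Matrix.mul_one, Matrix.trace_sub, t1, Matrix.trace_kronecker, hU0]
    simp
  -- simplify the twirl side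
  rw [twirl, t1, t2] at key2
  rw [chanOf_add, chanOf_smul, chanOf_smul, chanOf_sub, chanOf_one,
    chanOf_maxEnt ρ hρ1] at key2
  -- assemble
  have hgoal : ∑ k, (p k : ℂ) • ((V k)ᴴ * U * V k * ρ * (V k)ᴴ * Uᴴ * V k)
      = ∑ k, (p k : ℂ) • ((V k)ᴴ * U * V k * ρ * ((V k)ᴴ * U * V k)ᴴ) := by
    refine Finset.sum_congr rfl fun k _ => ?_
    congr 1
    simp [Matrix.conjTranspose_mul, Matrix.mul_assoc]
  rw [hgoal, key2]
  ext i j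
  simp only [Matrix.add_apply, Matrix.sub_apply, Matrix.smul_apply, Matrix.one_apply,
    smul_eq_mul, mul_ite, mul_one, mul_zero]
  by_cases h : i = j <;> simp [h] <;> field_simp <;> ring
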